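/- Let F be a field, let 1 ≤ r ≤ d be integers, and let M be a symmetric d×d matrix over F (indices from 0 to d−1) such that M_{x,y} = 0 whenever both r ≤ x ≤ d−1 and r ≤ y ≤ d−1. For θ ∈ F let ψ(θ) denote the row vector (1, θ, θ², …, θ^{d−1}). If there exist r pairwise distinct elements θ₁, …, θ_r of F with ψ(θ_i) · M = 0 for all i = 1, …, r, then M = 0. -/

import Mathlib

open Polynomial in
lemma pm_aux {F : Type*} [Field F] {r d : ℕ} (hr : 1 ≤ r)
    (θ : Fin r → F) (hθ : Function.Injective θ) (c : Fin d → F)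
    (hc : ∀ j : Fin d, r ≤ (j : ℕ) → c j = 0)
    (hev : ∀ i : Fin r, ∑ j : Fin d, c j * θ i ^ (j : ℕ) = 0) :
    ∀ j, c j = 0 := by
  classical
  set p : F[X] := ∑ j : Fin d, C (c j) * X ^ (j : ℕ) with hp
  have hcoeff : ∀ j : Fin d, p.coeff (j : ℕ) = c j := by
    intro j
    rw [hp, finset_sum_coeff]
    rw [Finset.sum_eq_single j]
    · simp
    · intro b _ hb
      rw [coeff_C_mul, coeff_X_pow, if_neg (by simpa [Fin.val_injective.eq_iff, eq_comm] using hb)]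
      simp
    · simp
  have hcoeff0 : ∀ m : ℕ, r ≤ m → p.coeff m = 0 := by
    intro m hm
    rw [hp, finset_sum_coeff]
    apply Finset.sum_eq_zero
    intro j _
    rw [coeff_C_mul, coeff_X_pow]
    by_cases hjm : m = (j : ℕ)
    · rw [if_pos hjm, hc j (hjm ▸ hm), mul_one]
    · rw [if_neg hjm, mul_zero]
  have hdeg : p.natDegree < r := by
    by_cases h0 : p = 0
    · simp [h0]; omega
    · rw [Polynomial.natDegree_lt_iff_degree_lt h0, Polynomial.degree_lt_iff_coeff_zero]
      intro m hm
      exact hcoeff0 m (by exact_mod_cast hm)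
  have heval : ∀ i : Fin r, p.eval (θ i) = 0 := by
    intro i
    rw [hp, Polynomial.eval_finset_sum]
    simpa using hev i
  have hp0 : p = 0 :=
    Polynomial.eq_zero_of_natDegree_lt_card_of_eval_eq_zero p hθ heval (by simpa using hdeg)
  intro j
  rw [← hcoeff j, hp0, Polynomial.coeff_zero]

/-- Data-collection property of the Product-Matrix MBR code with `k = r`: the
message matrix `M` is symmetric with zero bottom-right `(d−r)×(d−r)` block; if
the contents `ψ(θ_i)·M` of `r` nodes at pairwise distinct evaluation points
all vanish, then `M = 0`, where `ψ(θ) = (1, θ, …, θ^{d−1})`. -/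
theorem pm_mbr_data_collection
    (F : Type*) [Field F] (r d : ℕ) (hr : 1 ≤ r) (hrd : r ≤ d)
    (M : Matrix (Fin d) (Fin d) F) (hM : M.IsSymm)
    (hblock : ∀ x y : Fin d, r ≤ (x : ℕ) → r ≤ (y : ℕ) → M x y = 0)
    (θ : Fin r → F) (hθ : Function.Injective θ)
    (h : ∀ i : Fin r,
      Matrix.vecMul (fun j : Fin d => θ i ^ (j : ℕ)) M = 0) :
    M = 0 := by
  have hev : ∀ (i : Fin r) (y : Fin d), ∑ j : Fin d, M j y * θ i ^ (j : ℕ) = 0 := by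
    intro i y
    have := congrFun (h i) y
    simp only [Matrix.vecMul, dotProduct, Pi.zero_apply] at this
    simpa [mul_comm] using this
  have step1 : ∀ (x y : Fin d), r ≤ (y : ℕ) → M x y = 0 := by
    intro x y hy
    exact pm_aux hr θ hθ (fun j => M j y) (fun j hj => hblock j y hj hy)
      (fun i => hev i y) x
  have step2 : ∀ (x y : Fin d), M x y = 0 := by
    intro x y
    refine pm_aux hr θ hθ (fun j => M j y) (fun j hj => ?_) (fun i => hev i y) x
    show M j y = 0
    rw [← hM.apply j y]
    exact step1 y j hj
  ext x y
  exact step2 x y
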